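/- For the companion pencil with V having subdiagonal ones and last column (-v_1,...,-v_n)^T, and W being the identity except last column (w_1,...,w_{n-1},w_n)^T, where v_1 = a_0, v_{i+1} + w_i = a_i for i=1,...,n-1, and w_n = a_n, the generalized eigenvalues satisfy det(V - λW) = (-1)^n p(λ), where p(λ) = a_n λ^n + ... + a_0. In particular the eigenvalues of the pencil (V,W) are exactly the roots of p. -/

import Mathlib

open Matrix Finset

private def cmat (lam : ℂ) (n : ℕ) (v w : ℕ → ℂ) : Matrix (Fin (n+1)) (Fin (n+1)) ℂ :=
  Matrix.of fun i j =>
    if (i : ℕ) = (j : ℕ) + 1 then (1:ℂ)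
    else if (j : ℕ) = n then -(v ((i : ℕ) + 1) + lam * w ((i : ℕ) + 1))
    else if (i : ℕ) = (j : ℕ) then -lam else 0

private lemma cmat_det (lam : ℂ) : ∀ n (v w : ℕ → ℂ),
    (cmat lam n v w).det =
      (-1)^(n+1) * ∑ k ∈ Finset.range (n+1), lam^k * (v (k+1) + lam * w (k+1)) := by
  intro n
  induction n with
  | zero =>
    intro v w
    rw [det_fin_one]
    simp [cmat]
  | succ n ih =>
    intro v w
    set A := cmat lam (n+1) v w with hA
    rw [det_succ_row_zero, Fin.sum_univ_succ]
    have h00 : A 0 0 = -lam := by simp [hA, cmat]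
    have hsub0 : A.submatrix Fin.succ ((0 : Fin (n+2)).succAbove)
        = cmat lam n (fun k => v (k+1)) (fun k => w (k+1)) := by
      ext i j
      simp only [hA, Fin.succAbove_zero, submatrix_apply, cmat, Matrix.of_apply,
        Fin.val_succ, add_left_inj]
    have hsum : ∑ j : Fin (n+1),
        (-1:ℂ)^((Fin.succ j : Fin (n+2)) : ℕ) * A 0 (Fin.succ j) *
          det (A.submatrix Fin.succ (Fin.succ j).succAbove)
        = (-1)^(n+1) * (-(v 1 + lam * w 1)) := by
      rw [Finset.sum_eq_single (Fin.last n)]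
      · have h1 : Fin.succ (Fin.last n) = Fin.last (n+1) := by
          ext; simp
        rw [h1, Fin.succAbove_last]
        have h2 : A 0 (Fin.last (n+1)) = -(v 1 + lam * w 1) := by
          simp [hA, cmat]
        have h3 : det (A.submatrix Fin.succ Fin.castSucc) = 1 := by
          rw [Matrix.det_of_upperTriangular]
          · apply Finset.prod_eq_one
            intro k _
            simp [hA, cmat]
          · intro k l hlt
            have hlt' : (l : ℕ) < (k : ℕ) := hlt
            simp only [hA, submatrix_apply, cmat, Matrix.of_apply, Fin.val_succ,
              Fin.coe_castSucc]
            have hl : (l : ℕ) < n + 1 := l.isLt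
            rw [if_neg (by omega), if_neg (by omega), if_neg (by omega)]
        rw [h2, h3]
        simp [Fin.val_last]
      · intro b _ hb
        have hb' : (b : ℕ) < n := by
          have := b.isLt
          rcases Nat.lt_or_ge (b : ℕ) n with h | h
          · exact h
          · exact absurd (by ext; simp; omega : b = Fin.last n) hb
        have : A 0 (Fin.succ b) = 0 := by
          simp only [hA, cmat, Matrix.of_apply, Fin.val_succ, Fin.val_zero]
          simp only [show ¬ (0 = (b:ℕ)+1+1) by omega, show ¬ (0 = (b:ℕ)+1) by omega, show ¬ ((b:ℕ)+1 = n+1) by omega, ↓reduceIte]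
        rw [this]; ring
      · simp
    rw [hsub0, ih, hsum, h00]
    have hpeel : ∑ k ∈ Finset.range (n+2), lam^k * (v (k+1) + lam * w (k+1))
        = ∑ k ∈ Finset.range (n+1), lam^(k+1) * (v (k+2) + lam * w (k+2))
          + lam^0 * (v 1 + lam * w 1) := by
      rw [Finset.sum_range_succ' (fun k => lam^k * (v (k+1) + lam * w (k+1)))]
    rw [hpeel]
    have hT : ∑ k ∈ Finset.range (n+1), lam^(k+1) * (v (k+2) + lam * w (k+2))
        = lam * ∑ k ∈ Finset.range (n+1), lam^k * (v (k+1+1) + lam * w (k+1+1)) := by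
      rw [Finset.mul_sum]
      exact Finset.sum_congr rfl fun k _ => by ring
    rw [hT]
    simp only [Fin.val_zero, pow_zero, one_mul]
    ring

/-- For the companion pencil `(V, W)` built from splittings `v₁ = a₀`,
`v_{i+1} + w_i = a_i` (1 ≤ i ≤ n-1), `w_n = a_n`, one has
`det(V - λW) = (-1)ⁿ p(λ)` where `p(λ) = ∑ a_k λ^k`; hence the eigenvalues of
the pencil are exactly the roots of `p`. (Indices of `a`, `v`, `w` are
1-based as natural-number-indexed functions.) -/
theorem companion_pencil_det (n : ℕ) (hn : 0 < n) (a v w : ℕ → ℂ)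
    (ha : a n ≠ 0)
    (hv1 : v 1 = a 0)
    (hvw : ∀ i, 1 ≤ i → i ≤ n - 1 → v (i + 1) + w i = a i)
    (hwn : w n = a n)
    (V W : Matrix (Fin n) (Fin n) ℂ)
    (hV : ∀ i j : Fin n, V i j =
      if (i : ℕ) = (j : ℕ) + 1 then 1
      else if (j : ℕ) = n - 1 then -v ((i : ℕ) + 1)
      else 0)
    (hW : ∀ i j : Fin n, W i j =
      if (j : ℕ) = n - 1 then w ((i : ℕ) + 1)
      else if i = j then 1 else 0) :
    ∀ lam : ℂ, (V - lam • W).det =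
      (-1) ^ n * ∑ k ∈ Finset.range (n + 1), a k * lam ^ k := by
  obtain ⟨m, rfl⟩ : ∃ m, n = m + 1 := ⟨n - 1, by omega⟩
  intro lam
  have hM : V - lam • W = cmat lam m v w := by
    ext i j
    simp only [Matrix.sub_apply, Matrix.smul_apply, hV, hW, smul_eq_mul, cmat, Matrix.of_apply,
      Nat.add_sub_cancel]
    have hi := i.isLt
    simp only [Fin.ext_iff]
    split_ifs with h1 h2 h3 <;> try ring
    all_goals (exfalso; omega)
  rw [hM, cmat_det]
  congr 1
  have hpeel1 : ∑ k ∈ Finset.range (m+1), lam^k * (v (k+1) + lam * w (k+1))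
      = ∑ k ∈ Finset.range (m+1), (lam^k * v (k+1) + lam^(k+1) * w (k+1)) :=
    Finset.sum_congr rfl fun k _ => by ring
  rw [hpeel1, Finset.sum_add_distrib,
    Finset.sum_range_succ' (fun k => lam^k * v (k+1)),
    Finset.sum_range_succ (fun k => lam^(k+1) * w (k+1)),
    Finset.sum_range_succ (fun k => a k * lam^k),
    Finset.sum_range_succ' (fun k => a k * lam^k)]
  have hmid : ∑ k ∈ Finset.range m, lam^(k+1) * v (k+1+1)
      + ∑ k ∈ Finset.range m, lam^(k+1) * w (k+1)
      = ∑ k ∈ Finset.range m, a (k+1) * lam^(k+1) := by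
    rw [← Finset.sum_add_distrib]
    refine Finset.sum_congr rfl fun k hk => ?_
    have hk' : k < m := Finset.mem_range.mp hk
    have := hvw (k+1) (by omega) (by omega)
    rw [show (k+1+1 : ℕ) = (k+1)+1 from rfl, ← this]
    ring
  rw [hv1, hwn] at *
  linear_combination hmid
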